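/- Let Le ∈ (0,1), λ ∈ ℂ with Re λ ≥ 1, and λ_k ≥ 0. Set Y_k = √(Le² + 4λ·Le + 4λ_k) (principal square root). Then |Y_k − Le| ≥ (Le/2)·√(1 + |λ| + λ_k). -/

import Mathlib

set_option maxHeartbeats 1000000

private lemma stmt11_core (Le lamk r : ℝ) (hLe : 0 < Le) (hLe1 : Le < 1) (hlamk : 0 ≤ lamk)
    (hr : 1 ≤ r) :
    Le^2*(1+r+lamk)*(Le^2+4*Le*r+4*lamk) ≤ 16*Le^2*r^2 + 32*Le*lamk + 16*lamk^2 := by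
  have hr0 : (0:ℝ) ≤ r := by linarith
  have hs : (0:ℝ) ≤ 1 - Le := by linarith
  have hs2 : (0:ℝ) ≤ 1 - Le^2 := by nlinarith
  have hr21 : (0:ℝ) ≤ r^2 - 1 := by nlinarith
  have h1 : 0 ≤ Le^2*(r^2-1) := mul_nonneg (sq_nonneg Le) hr21
  have h2 : 0 ≤ Le^2*(1-Le^2) := mul_nonneg (sq_nonneg Le) hs2
  have h3 : 0 ≤ Le^2*r*(r-Le) := mul_nonneg (mul_nonneg (sq_nonneg Le) hr0) (by linarith)
  have h4 : 0 ≤ Le^2*r*(r-Le^2) := mul_nonneg (mul_nonneg (sq_nonneg Le) hr0) (by nlinarith)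
  have h5 : 0 ≤ Le*lamk*(1-Le) := mul_nonneg (mul_nonneg hLe.le hlamk) hs
  have h6 : 0 ≤ Le*(Le*r-lamk)^2 := mul_nonneg hLe.le (sq_nonneg _)
  have h7 : 0 ≤ (1-Le)*(Le*r-lamk)^2 := mul_nonneg hs (sq_nonneg _)
  have h8 : 0 ≤ lamk^2*(1-Le^2) := mul_nonneg (sq_nonneg _) hs2
  have h9 : 0 ≤ Le*lamk*(1-Le^3) := mul_nonneg (mul_nonneg hLe.le hlamk) (by nlinarith)
  have h10 : 0 ≤ Le^2*r^2*(1-Le) := mul_nonneg (mul_nonneg (sq_nonneg Le) (sq_nonneg r)) hs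
  nlinarith [h1,h2,h3,h4,h5,h6,h7,h8,h9,h10]

theorem stmt11 (Le lamk : ℝ) (hLe : 0 < Le) (hLe1 : Le < 1) (hlamk : 0 ≤ lamk)
    (lam : ℂ) (hlam : 1 ≤ lam.re)
    (Y : ℂ)
    (hY : Y = ((Le : ℂ) ^ 2 + 4 * lam * (Le : ℂ) + 4 * (lamk : ℂ)) ^ ((1 : ℂ) / 2)) :
    (Le / 2) * Real.sqrt (1 + ‖lam‖ + lamk) ≤ ‖Y - (Le : ℂ)‖ := by
  set r := ‖lam‖ with hrdef
  set x := lam.re with hxdef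
  set yy := lam.im with hyydef
  set z : ℂ := (Le : ℂ) ^ 2 + 4 * lam * (Le : ℂ) + 4 * (lamk : ℂ) with hzdef
  have hzre : z.re = Le^2 + 4*x*Le + 4*lamk := by
    simp [hzdef, Complex.add_re, Complex.mul_re, Complex.mul_im, pow_two]
    exact Or.inl rfl
  have hz0 : z ≠ 0 := by
    intro h
    rw [h] at hzre
    simp at hzre
    nlinarith
  have hY2 : Y ^ 2 = z := by
    rw [hY]
    have h := Complex.cpow_nat_inv_pow z (n := 2) (by norm_num)
    have h2 : ((1:ℂ)/2) = ((2:ℕ):ℂ)⁻¹ := by norm_num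
    rw [h2]
    exact h
  have hfact : (Y - (Le:ℂ)) * (Y + (Le:ℂ)) = 4 * lam * (Le : ℂ) + 4 * (lamk : ℂ) := by
    have : Y^2 = (Le : ℂ) ^ 2 + 4 * lam * (Le : ℂ) + 4 * (lamk : ℂ) := hY2
    linear_combination this
  set w : ℂ := 4 * lam * (Le : ℂ) + 4 * (lamk : ℂ) with hwdef
  set A := ‖Y - (Le:ℂ)‖ with hAdef
  set B := ‖Y + (Le:ℂ)‖ with hBdef
  set W := ‖w‖ with hWdef
  have hAB : A * B = W := by rw [hAdef, hBdef, hWdef, ← norm_mul, hfact]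
  have hwre : w.re = 4*x*Le + 4*lamk := by
    simp [hwdef, Complex.add_re, Complex.mul_re, Complex.mul_im]
    exact Or.inl rfl
  have hwim : w.im = 4*yy*Le := by
    simp [hwdef, Complex.add_im, Complex.mul_re, Complex.mul_im]
    exact Or.inl rfl
  have hWpos : 0 < W := by
    have h1 : w.re ≤ W := Complex.re_le_norm w
    rw [hwre] at h1
    nlinarith
  have hBpos : 0 < B := by
    rcases lt_or_eq_of_le (norm_nonneg (Y + (Le:ℂ))) with h | h
    · exact h
    · exfalso; rw [hBdef, ← h, mul_zero] at hAB; exact hWpos.ne hAB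
  have hr1 : 1 ≤ r := le_trans hlam (Complex.re_le_norm lam)
  have hr2 : r^2 = x^2 + yy^2 := by
    rw [hrdef, Complex.sq_norm, Complex.normSq_apply]; ring
  have hW2 : W^2 = (4*x*Le + 4*lamk)^2 + (4*yy*Le)^2 := by
    rw [hWdef, Complex.sq_norm, Complex.normSq_apply, ← hwre, ← hwim]; ring
  have hYabs2 : (‖Y‖)^2 = ‖z‖ := by
    rw [← norm_pow, hY2]
  have habsz_le : ‖z‖ ≤ Le^2 + 4*Le*r + 4*lamk := by
    have h1 : ‖z‖ ≤ ‖(Le:ℂ)^2 + 4*lam*(Le:ℂ)‖ + ‖4*(lamk:ℂ)‖ :=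
      norm_add_le _ _
    have h2 : ‖(Le:ℂ)^2 + 4*lam*(Le:ℂ)‖ ≤ ‖(Le:ℂ)^2‖ + ‖4*lam*(Le:ℂ)‖ :=
      norm_add_le _ _
    have e1 : ‖(Le:ℂ)^2‖ = Le^2 := by
      rw [norm_pow, Complex.norm_real, Real.norm_eq_abs, abs_of_pos hLe]
    have e2 : ‖4*lam*(Le:ℂ)‖ = 4*Le*r := by
      rw [norm_mul, norm_mul, Complex.norm_real, Real.norm_eq_abs, abs_of_pos hLe]
      simp [hrdef]
      ring
    have e3 : ‖4*(lamk:ℂ)‖ = 4*lamk := by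
      rw [norm_mul, Complex.norm_real, Real.norm_eq_abs, abs_of_nonneg hlamk]
      simp
    rw [e1, e2] at h2
    rw [e3] at h1
    linarith
  have hzre_le : Le^2 ≤ ‖z‖ := by
    have h1 : z.re ≤ ‖z‖ := Complex.re_le_norm z
    rw [hzre] at h1
    nlinarith
  have hLeY : Le ≤ ‖Y‖ := by
    nlinarith [hYabs2, hzre_le, norm_nonneg Y]
  have hB_le : B ≤ ‖Y‖ + Le := by
    have := norm_add_le Y ((Le:ℂ))
    rwa [Complex.norm_real, Real.norm_eq_abs, abs_of_pos hLe] at this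
  have hB2 : B^2 ≤ 4 * (Le^2 + 4*Le*r + 4*lamk) := by
    have h1 : B^2 ≤ 4 * (‖Y‖)^2 := by nlinarith [hB_le, hLeY, hBpos.le, norm_nonneg Y]
    rw [hYabs2] at h1
    linarith [habsz_le]
  set T := 1 + r + lamk with hTdef
  have hTnn : (0:ℝ) ≤ T := by positivity
  have hsqT : Real.sqrt T ^ 2 = T := Real.sq_sqrt hTnn
  have hcore : Le^2*T*(Le^2+4*Le*r+4*lamk) ≤ W^2 := by
    have h1 := stmt11_core Le lamk r hLe hLe1 hlamk hr1
    have h2 : W^2 = 16*Le^2*r^2 + 32*Le*x*lamk + 16*lamk^2 := by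
      rw [hW2]
      nlinarith [hr2]
    have h3 : 32*Le*lamk ≤ 32*Le*x*lamk := by nlinarith [mul_nonneg hLe.le hlamk]
    rw [hTdef]
    linarith
  -- now conclude
  have hkey : (Le/2) * Real.sqrt T * B ≤ W := by
    have hlhs_nn : 0 ≤ (Le/2) * Real.sqrt T * B := by positivity
    have hsq : ((Le/2) * Real.sqrt T * B)^2 ≤ W^2 := by
      have e : ((Le/2) * Real.sqrt T * B)^2 = Le^2 * T * B^2 / 4 := by
        rw [mul_pow, mul_pow, hsqT]; ring
      rw [e]
      have hmul : Le^2 * T * B^2 ≤ Le^2 * T * (4 * (Le^2 + 4*Le*r + 4*lamk)) :=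
        mul_le_mul_of_nonneg_left hB2 (by positivity)
      nlinarith [hmul, hcore]
    nlinarith [hWpos.le, hlhs_nn]
  calc (Le / 2) * Real.sqrt T = (Le/2) * Real.sqrt T * B / B := by field_simp
    _ ≤ W / B := by gcongr
    _ = A := by rw [← hAB]; field_simp
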